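/- arXiv:1405.4275 — 4 statements merged into one kernel-verified Lean document; each statement's English description precedes it below -/
import Mathlib

section
/- Let x_1, …, x_n ∈ ℝ^p and suppose P = conv{x_1, …, x_n} is full-dimensional with exactly k extreme points h_1, …, h_k, whose normal cones have solid angles ω_i = ω(N_P(h_i)) satisfying 0 < ω_i < 1/2 for every i. Let g_1, …, g_m be i.i.d. standard Gaussian vectors in ℝ^p and let δ ∈ (0,1). If m > κ log(k/δ) where κ = 1/log(1/max_i(1 − 2ω_i)), then with probability at least 1 − δ, for every i ∈ {1,…,k} there exists j ∈ {1,…,m} with g_j ∈ N_P(h_i) ∪ (−N_P(h_i)); that is, the proto-algorithm finds all k extreme points. -/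
open MeasureTheory ProbabilityTheory Metric Set
open scoped Pointwise

/-- The standard Gaussian measure `N(0, I_p)` on `ℝ^p`. -/
noncomputable def stdGaussian (p : ℕ) : Measure (EuclideanSpace ℝ (Fin p)) :=
  (Measure.pi fun _ : Fin p => gaussianReal 0 1).map
    (MeasurableEquiv.toLp 2 (Fin p → ℝ))

/-- The solid angle of a cone `K ⊆ ℝ^p`: its standard Gaussian measure. -/
noncomputable def solidAngle {p : ℕ} (K : Set (EuclideanSpace ℝ (Fin p))) : ℝ :=
  (stdGaussian p K).toReal

/-- The normal cone of a convex set `C` at a point `x`. -/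
def normalCone {p : ℕ} (C : Set (EuclideanSpace ℝ (Fin p))) (x : EuclideanSpace ℝ (Fin p)) :
    Set (EuclideanSpace ℝ (Fin p)) :=
  {w | ∀ y ∈ C, (inner ℝ w (y - x) : ℝ) ≤ 0}

instance (p : ℕ) : IsProbabilityMeasure (stdGaussian p) :=
  Measure.isProbabilityMeasure_map (MeasurableEquiv.measurable _).aemeasurable

lemma gauss_neg' : Measure.map (fun x : ℝ => -x) (gaussianReal 0 1) = gaussianReal 0 1 := by
  have := gaussianReal_map_const_mul (μ := 0) (v := 1) (-1)
  simpa [neg_mul, one_mul] using this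

lemma pi_neg' (p : ℕ) : Measure.map (fun g : Fin p → ℝ => -g)
    (Measure.pi fun _ => gaussianReal 0 1) = (Measure.pi fun _ => gaussianReal 0 1) := by
  refine (Measure.pi_eq fun s hs => ?_).symm
  rw [Measure.map_apply measurable_neg (MeasurableSet.univ_pi hs)]
  have : (fun g : Fin p → ℝ => -g) ⁻¹' (Set.pi Set.univ s)
      = Set.pi Set.univ (fun i => (fun x : ℝ => -x) ⁻¹' (s i)) := by
    ext g; simp [Set.mem_pi]
  rw [this, Measure.pi_pi]
  refine Finset.prod_congr rfl fun i _ => ?_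
  rw [← Measure.map_apply measurable_neg (hs i), gauss_neg']

lemma stdGaussian_neg' (p : ℕ) (K : Set (EuclideanSpace ℝ (Fin p))) (hK : MeasurableSet K) :
    stdGaussian p (-K) = stdGaussian p K := by
  unfold _root_.stdGaussian
  rw [MeasurableEquiv.map_apply, MeasurableEquiv.map_apply]
  have h2 : (MeasurableEquiv.toLp 2 (Fin p → ℝ)) ⁻¹' (-K)
      = (fun g : Fin p → ℝ => -g) ⁻¹' ((MeasurableEquiv.toLp 2 (Fin p → ℝ)) ⁻¹' K) := by
    ext g; simp [Set.mem_neg]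
  rw [h2, ← Measure.map_apply measurable_neg (hK.preimage (MeasurableEquiv.measurable _)),
    pi_neg' p]

lemma pi_forall_not' (p m : ℕ) (S : Set (EuclideanSpace ℝ (Fin p))) :
    (Measure.pi fun _ : Fin m => stdGaussian p) {g | ∀ j, g j ∉ S}
      = (stdGaussian p Sᶜ) ^ m := by
  have h1 : {g : Fin m → EuclideanSpace ℝ (Fin p) | ∀ j, g j ∉ S}
      = Set.pi Set.univ (fun _ => Sᶜ) := by ext g; simp [Set.mem_pi]
  rw [h1, Measure.pi_pi]
  simp [Finset.prod_const]

lemma normalCone_isClosed' {p : ℕ} (C : Set (EuclideanSpace ℝ (Fin p)))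
    (x : EuclideanSpace ℝ (Fin p)) : IsClosed (normalCone C x) := by
  have h : normalCone C x
      = ⋂ y ∈ C, {w : EuclideanSpace ℝ (Fin p) | (inner ℝ w (y - x) : ℝ) ≤ 0} := by
    ext w; simp [normalCone]
  rw [h]
  exact isClosed_biInter fun y _ =>
    isClosed_le (continuous_id.inner continuous_const) continuous_const

lemma stdGaussian_singleton' (p : ℕ) (hp : 0 < p) (v : EuclideanSpace ℝ (Fin p)) :
    stdGaussian p {v} = 0 := by
  unfold _root_.stdGaussian
  rw [MeasurableEquiv.map_apply]
  have h1 : (MeasurableEquiv.toLp 2 (Fin p → ℝ)) ⁻¹' {v}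
      = Set.pi Set.univ (fun i => {v i}) := by
    ext g
    simp only [Set.mem_preimage, Set.mem_singleton_iff, Set.mem_pi, Set.mem_univ, true_implies]
    constructor
    · intro hg i; rw [← hg]; rfl
    · intro hg; ext i; exact hg i
  rw [h1, Measure.pi_pi]
  have h2 : gaussianReal 0 1 {v ⟨0, hp⟩} = 0 :=
    (gaussianReal_absolutelyContinuous 0 one_ne_zero) (measure_singleton _)
  rw [Finset.prod_eq_zero (Finset.mem_univ ⟨0, hp⟩) h2]

lemma normalCone_inter_neg' {p : ℕ} (P : Set (EuclideanSpace ℝ (Fin p)))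
    (hfull : (interior P).Nonempty) (x : EuclideanSpace ℝ (Fin p)) :
    normalCone P x ∩ -normalCone P x ⊆ {0} := by
  rintro w ⟨hw1, hw2⟩
  have hw2' : ∀ y ∈ P, (0 : ℝ) ≤ inner ℝ w (y - x) := by
    intro y hy
    have := hw2 y hy
    rw [inner_neg_left] at this
    linarith
  simp only [Set.mem_singleton_iff]
  by_contra hw0
  obtain ⟨z, hz⟩ := hfull
  obtain ⟨ε, hε, hball⟩ := Metric.mem_nhds_iff.mp (mem_interior_iff_mem_nhds.mp hz)
  set c : ℝ := (ε / 2) / ‖w‖ with hc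
  have hwn : 0 < ‖w‖ := norm_pos_iff.mpr hw0
  have hcpos : 0 < c := div_pos (half_pos hε) hwn
  have hyP : z + c • w ∈ P := by
    apply hball
    simp only [Metric.mem_ball, dist_eq_norm]
    have : z + c • w - z = c • w := by abel
    rw [this, norm_smul, Real.norm_eq_abs, abs_of_pos hcpos, hc,
      div_mul_cancel₀ _ hwn.ne']
    linarith
  have hzP : z ∈ P := interior_subset hz
  have e1 : (inner ℝ w (z + c • w - x) : ℝ) = inner ℝ w (z - x) + c * (inner ℝ w w : ℝ) := by
    have : z + c • w - x = (z - x) + c • w := by abel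
    rw [this, inner_add_right, real_inner_smul_right]
  have h1 : (inner ℝ w (z + c • w - x) : ℝ) ≤ 0 := hw1 _ hyP
  have h2 : (0:ℝ) ≤ inner ℝ w (z - x) := hw2' z hzP
  have h3 : (0:ℝ) < c * inner ℝ w w := by
    apply mul_pos hcpos
    rw [real_inner_self_eq_norm_sq]
    positivity
  linarith [e1 ▸ h1]

/-- Theorem 1 (exact recovery): if `m > κ log(k/δ)` with
`κ = 1/log(1/max_i (1 - 2ω_i))`, then with probability at least `1 - δ` the proto-algorithm
finds all `k` extreme points, i.e. every normal cone (or its negation) contains some `g_j`. -/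
theorem proto_algorithm_exact_recovery
    (p n k m : ℕ) (x : Fin n → EuclideanSpace ℝ (Fin p))
    (P : Set (EuclideanSpace ℝ (Fin p))) (hP : P = convexHull ℝ (Set.range x))
    (hfull : (interior P).Nonempty)
    (h : Fin k → EuclideanSpace ℝ (Fin p)) (hinj : Function.Injective h)
    (hext : Set.range h = Set.extremePoints ℝ P)
    (ω : Fin k → ℝ) (hω : ∀ i, ω i = solidAngle (normalCone P (h i)))
    (hωpos : ∀ i, 0 < ω i) (hωlt : ∀ i, ω i < 1 / 2)
    (δ : ℝ) (hδ : δ ∈ Set.Ioo (0 : ℝ) 1)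
    (κ : ℝ) (hκ : κ = 1 / Real.log (1 / (⨆ i, 1 - 2 * ω i)))
    (hm : (m : ℝ) > κ * Real.log (k / δ)) :
    1 - δ ≤ ((Measure.pi fun _ : Fin m => stdGaussian p)
      {g | ∀ i : Fin k, ∃ j : Fin m,
        g j ∈ normalCone P (h i) ∪ -normalCone P (h i)}).toReal := by
  obtain ⟨hδ0, hδ1⟩ := hδ
  rcases Nat.eq_zero_or_pos k with hk0 | hk
  · subst hk0
    have hE : {g : Fin m → EuclideanSpace ℝ (Fin p) | ∀ i : Fin 0, ∃ j : Fin m,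
        g j ∈ normalCone P (h i) ∪ -normalCone P (h i)} = Set.univ := by
      ext g; simp only [Set.mem_setOf_eq, Set.mem_univ, iff_true]
      exact fun i => i.elim0
    rw [hE, measure_univ, ENNReal.toReal_one]; linarith
  haveI : Nonempty (Fin k) := ⟨⟨0, hk⟩⟩
  rcases Nat.eq_zero_or_pos p with hp0 | hp
  · exfalso
    subst hp0
    set i : Fin k := ⟨0, hk⟩
    have hcone : normalCone P (h i) = Set.univ := by
      ext w
      simp only [Set.mem_univ, iff_true]
      intro y hy
      have hy0 : y - h i = 0 := by ext j; exact j.elim0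
      rw [hy0, inner_zero_right]
    have hω1 : ω i = 1 := by
      rw [hω i, hcone]; unfold solidAngle; rw [measure_univ, ENNReal.toReal_one]
    linarith [hωlt i]
  -- main case
  set ν := stdGaussian p with hν
  set S : Fin k → Set (EuclideanSpace ℝ (Fin p)) :=
    fun i => normalCone P (h i) ∪ -normalCone P (h i) with hSdef
  have hKm : ∀ i, MeasurableSet (normalCone P (h i)) :=
    fun i => (normalCone_isClosed' P (h i)).measurableSet
  have hSm : ∀ i, MeasurableSet (S i) := fun i => (hKm i).union (hKm i).neg
  have hνK : ∀ i, ν (normalCone P (h i)) = ENNReal.ofReal (ω i) := by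
    intro i
    rw [hω i]; unfold solidAngle
    rw [ENNReal.ofReal_toReal (measure_ne_top _ _)]
  have hνS : ∀ i, ν (S i) = ENNReal.ofReal (2 * ω i) := by
    intro i
    have hinter : ν (normalCone P (h i) ∩ -normalCone P (h i)) = 0 :=
      measure_mono_null (normalCone_inter_neg' P hfull (h i)) (stdGaussian_singleton' p hp 0)
    have hU := measure_union_add_inter (μ := ν) (normalCone P (h i)) (hKm i).neg
    rw [hinter, add_zero, stdGaussian_neg' p _ (hKm i), hνK i] at hU
    rw [hSdef]
    simp only
    rw [hU, ← ENNReal.ofReal_add (hωpos i).le (hωpos i).le, two_mul]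
  have hωle : ∀ i, 2 * ω i ≤ 1 := fun i => by linarith [hωlt i]
  have hνSc : ∀ i, ν (S i)ᶜ = ENNReal.ofReal (1 - 2 * ω i) := by
    intro i
    rw [measure_compl (hSm i) (measure_ne_top _ _), measure_univ, hνS i,
      ENNReal.ofReal_sub _ (by linarith [hωpos i] : (0:ℝ) ≤ 2 * ω i), ENNReal.ofReal_one]
  -- supremum R
  set R : ℝ := ⨆ i, 1 - 2 * ω i with hR
  have hbdd : BddAbove (Set.range fun i => 1 - 2 * ω i) :=
    Set.Finite.bddAbove (Set.finite_range _)
  have hleR : ∀ i, 1 - 2 * ω i ≤ R := fun i => le_ciSup hbdd i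
  obtain ⟨i0, hi0max⟩ := Finite.exists_max (fun i => 1 - 2 * ω i)
  have hReq : R = 1 - 2 * ω i0 := le_antisymm (ciSup_le hi0max) (hleR i0)
  have hR0 : 0 < R := by rw [hReq]; linarith [hωlt i0]
  have hR1 : R < 1 := by rw [hReq]; linarith [hωpos i0]
  -- numeric bound : k * R^m ≤ δ
  have hLr : 0 < Real.log (1 / R) := Real.log_pos (by rw [lt_div_iff₀ hR0]; linarith)
  have hκpos : 0 < κ := by rw [hκ]; positivity
  have hkR : (k : ℝ) ≥ 1 := by exact_mod_cast hk
  have hkδ : 1 < (k : ℝ) / δ := by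
    rw [lt_div_iff₀ hδ0]; nlinarith
  have hL : 0 < Real.log ((k : ℝ) / δ) := Real.log_pos hkδ
  have hmL : Real.log ((k : ℝ) / δ) < (m : ℝ) * Real.log (1 / R) := by
    have : κ * Real.log ((k:ℝ)/δ) = Real.log ((k:ℝ)/δ) / Real.log (1/R) := by
      rw [hκ]; ring
    rw [this] at hm
    exact (div_lt_iff₀ hLr).mp hm
  have hlogR : Real.log (1 / R) = - Real.log R := by
    rw [one_div, Real.log_inv]
  have hRm : R ^ m < δ / (k:ℝ) := by
    have hRmpos : (0:ℝ) < R ^ m := pow_pos hR0 m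
    have hδne : δ ≠ 0 := by linarith
    have hkne : (k:ℝ) ≠ 0 := by linarith
    have hlog : Real.log (R ^ m) < Real.log (δ / (k:ℝ)) := by
      have hmL' : Real.log (k:ℝ) - Real.log δ < (m:ℝ) * (- Real.log R) := by
        rw [← Real.log_div hkne hδne, ← hlogR]; exact hmL
      rw [Real.log_pow, Real.log_div hδne hkne]
      push_cast
      nlinarith [hmL']
    have hδk : (0:ℝ) < δ / k := div_pos hδ0 (by linarith)
    exact (Real.log_lt_log_iff hRmpos hδk).mp hlog
  have hkRm : (k : ℝ) * R ^ m ≤ δ := by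
    rw [mul_comm]
    have := (lt_div_iff₀ (by linarith : (0:ℝ) < (k:ℝ))).mp hRm
    linarith
  -- measure-theoretic part
  set μm := (Measure.pi fun _ : Fin m => stdGaussian p) with hμm
  set E : Set (Fin m → EuclideanSpace ℝ (Fin p)) :=
    {g | ∀ i : Fin k, ∃ j : Fin m, g j ∈ normalCone P (h i) ∪ -normalCone P (h i)} with hE
  have hEeq : E = ⋂ i, ⋃ j, (fun g : Fin m → EuclideanSpace ℝ (Fin p) => g j) ⁻¹' S i := by
    ext g; simp [hE, hSdef]
  have hEm : MeasurableSet E := by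
    rw [hEeq]
    exact MeasurableSet.iInter fun i => MeasurableSet.iUnion fun j =>
      (hSm i).preimage (measurable_pi_apply j)
  have hcompl : Eᶜ = ⋃ i, {g : Fin m → EuclideanSpace ℝ (Fin p) | ∀ j, g j ∉ S i} := by
    ext g
    simp only [Set.mem_compl_iff, hE, Set.mem_setOf_eq, Set.mem_iUnion, hSdef]
    push_neg
    rfl
  have hbound : μm Eᶜ ≤ ENNReal.ofReal δ := by
    rw [hcompl]
    calc μm (⋃ i, {g : Fin m → EuclideanSpace ℝ (Fin p) | ∀ j, g j ∉ S i})
        ≤ ∑ i : Fin k, μm {g | ∀ j, g j ∉ S i} := measure_iUnion_fintype_le _ _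
      _ = ∑ i : Fin k, (ν (S i)ᶜ) ^ m := by
          refine Finset.sum_congr rfl fun i _ => ?_
          exact pi_forall_not' p m (S i)
      _ ≤ ∑ i : Fin k, (ENNReal.ofReal R) ^ m := by
          refine Finset.sum_le_sum fun i _ => ?_
          rw [hνSc i]
          exact pow_le_pow_left' (ENNReal.ofReal_le_ofReal (hleR i)) m
      _ = (k : ENNReal) * (ENNReal.ofReal R) ^ m := by
          rw [Finset.sum_const, Finset.card_univ, Fintype.card_fin, nsmul_eq_mul]
      _ = ENNReal.ofReal ((k : ℝ) * R ^ m) := by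
          rw [ENNReal.ofReal_mul (by positivity), ← ENNReal.ofReal_pow hR0.le,
            ENNReal.ofReal_natCast]
      _ ≤ ENNReal.ofReal δ := ENNReal.ofReal_le_ofReal hkRm
  have hcE : (μm Eᶜ).toReal ≤ δ := ENNReal.toReal_le_of_le_ofReal hδ0.le hbound
  have hsum : (μm E).toReal + (μm Eᶜ).toReal = 1 := by
    rw [← ENNReal.toReal_add (measure_ne_top _ _) (measure_ne_top _ _),
      measure_add_measure_compl hEm, measure_univ, ENNReal.toReal_one]
  linarith
end

section
/- Let P ⊂ ℝ^k (k ≥ 2) be a convex polytope with at least two extreme points, let h be an extreme point of P with simplicial constant α = α_P(h) > 0, and suppose there exist r > 0 and a unit vector a ∈ S^{k−1} such that r²/(α² + r²) ≥ 1/2 and the tangent cone T_P(h) = cone(P − h) contains the circular cone {x ∈ ℝ^k : ⟨a, x⟩ ≥ (α/√(α² + r²))‖x‖₂} (the cone with axis a and half-angle arctan(r/α)). Then the solid angle of the normal cone satisfies ω(N_P(h)) ≤ (√(α² + r²)/(2r))^k. -/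
open MeasureTheory ProbabilityTheory Metric Set
open scoped Pointwise

/-- The simplicial constant of a polytope `P` at an extreme point `h`: the distance from
`h` to the convex hull of the other extreme points. -/
noncomputable def simplicialConst {k : ℕ} (P : Set (EuclideanSpace ℝ (Fin k)))
    (h : EuclideanSpace ℝ (Fin k)) : ℝ :=
  Metric.infDist h (convexHull ℝ (Set.extremePoints ℝ P \ {h}))

/-! ### Auxiliary lemmas -/

open ENNReal in
/-- Tonelli for a product of one-variable functions over a finite product of copies of `ℝ`. -/
lemma lintegral_pi_prod_aux : ∀ {n : ℕ} (f : Fin n → ℝ → ℝ≥0∞), (∀ i, Measurable (f i)) →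
    ∫⁻ x, ∏ i, f i (x i) ∂(Measure.pi fun _ : Fin n => (volume : Measure ℝ)) =
      ∏ i, ∫⁻ t, f i t := by
  intro n
  induction n with
  | zero =>
    intro f _
    simp [Measure.pi_univ]
  | succ n ih =>
    intro f hf
    have mp := (measurePreserving_piFinSuccAbove
      (fun _ : Fin (n + 1) => (volume : Measure ℝ)) 0).symm
    have hF : Measurable fun x : Fin (n + 1) → ℝ => ∏ i, f i (x i) :=
      Finset.measurable_prod _ fun i _ => (hf i).comp (measurable_pi_apply i)
    rw [← mp.lintegral_comp hF]
    have hcomp : ∀ y : ℝ × (Fin n → ℝ),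
        (∏ i, f i (((MeasurableEquiv.piFinSuccAbove (fun _ : Fin (n + 1) => ℝ) 0).symm y) i)) =
          f 0 y.1 * ∏ i : Fin n, f i.succ (y.2 i) := by
      intro y
      have h0 : ((MeasurableEquiv.piFinSuccAbove (fun _ : Fin (n + 1) => ℝ) 0).symm y) =
          Fin.cons y.1 y.2 := by
        simp [MeasurableEquiv.piFinSuccAbove_symm_apply, Fin.insertNthEquiv,
          Fin.insertNth_zero']
      rw [h0, Fin.prod_univ_succ]
      simp
    calc ∫⁻ y, (∏ i, f i
          (((MeasurableEquiv.piFinSuccAbove (fun _ : Fin (n + 1) => ℝ) 0).symm y) i))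
            ∂((volume : Measure ℝ).prod (Measure.pi fun _ : Fin n => (volume : Measure ℝ)))
        = ∫⁻ y, f 0 y.1 * ∏ i : Fin n, f i.succ (y.2 i)
            ∂((volume : Measure ℝ).prod (Measure.pi fun _ : Fin n => (volume : Measure ℝ))) := by
          exact lintegral_congr hcomp
      _ = (∫⁻ t, f 0 t) * ∫⁻ y, ∏ i : Fin n, f i.succ (y i)
            ∂(Measure.pi fun _ : Fin n => (volume : Measure ℝ)) := by
          exact lintegral_prod_mul (hf 0).aemeasurable
            (Finset.measurable_prod _ fun (i : Fin n) _ =>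
              (hf i.succ).comp (measurable_pi_apply i)).aemeasurable
      _ = (∫⁻ t, f 0 t) * ∏ i : Fin n, ∫⁻ t, f i.succ t := by
          rw [ih (fun i => f i.succ) (fun i => hf i.succ)]
      _ = ∏ i, ∫⁻ t, f i t := (Fin.prod_univ_succ fun i => ∫⁻ t, f i t).symm

open ENNReal in
/-- Finite product of `withDensity` measures on `ℝ` is a `withDensity` of the product. -/
lemma pi_withDensity_aux {p : ℕ} :
    Measure.pi (fun _ : Fin p => gaussianReal 0 1) =
      (Measure.pi fun _ : Fin p => (volume : Measure ℝ)).withDensity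
        fun x => ∏ i, gaussianPDF 0 1 (x i) := by
  set f : ℝ → ℝ≥0∞ := gaussianPDF 0 1 with hfdef
  have hf : Measurable f := measurable_gaussianPDF 0 1
  refine Measure.pi_eq fun s hs => ?_
  rw [withDensity_apply _ (MeasurableSet.univ_pi hs)]
  have hind : ∀ x : Fin p → ℝ,
      (Set.univ.pi s).indicator (fun x => ∏ i, f (x i)) x = ∏ i, (s i).indicator f (x i) := by
    intro x
    by_cases hx : x ∈ Set.univ.pi s
    · rw [Set.indicator_of_mem hx]
      exact Finset.prod_congr rfl fun i _ => (Set.indicator_of_mem (hx i trivial) f).symm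
    · rw [Set.indicator_of_notMem hx]
      simp only [Set.mem_pi, Set.mem_univ, forall_true_left, not_forall] at hx
      obtain ⟨i, hi⟩ := hx
      exact (Finset.prod_eq_zero (Finset.mem_univ i)
        (by rw [Set.indicator_of_notMem hi])).symm
  rw [← lintegral_indicator (MeasurableSet.univ_pi hs) _]
  rw [lintegral_congr hind]
  refine (lintegral_pi_prod_aux (fun i => (s i).indicator f)
    (fun i => hf.indicator (hs i))).trans ?_
  refine Finset.prod_congr rfl fun i _ => ?_
  rw [gaussianReal_apply 0 one_ne_zero (s i), ← lintegral_indicator (hs i) _]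

open ENNReal in
lemma map_withDensity_equiv_aux {α β : Type*} [MeasurableSpace α] [MeasurableSpace β]
    (e : α ≃ᵐ β) (μ : Measure α) {f : β → ℝ≥0∞} (hf : Measurable f) :
    (μ.withDensity (f ∘ e)).map e = (μ.map e).withDensity f := by
  refine Measure.ext fun S hS => ?_
  rw [Measure.map_apply e.measurable hS, withDensity_apply _ hS,
    withDensity_apply _ (e.measurable hS),
    setLIntegral_map hS hf e.measurable]
  rfl

open ENNReal in
/-- The standard Gaussian is absolutely continuous with the usual density. -/
lemma stdGaussian_eq_withDensity (k : ℕ) :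
    stdGaussian k = (volume : Measure (EuclideanSpace ℝ (Fin k))).withDensity
      (fun x => ENNReal.ofReal ((Real.sqrt (2 * Real.pi))⁻¹ ^ k * Real.exp (-‖x‖ ^ 2 / 2))) := by
  have hγ : gaussianReal 0 1 = (volume : Measure ℝ).withDensity (gaussianPDF 0 1) :=
    gaussianReal_of_var_ne_zero 0 one_ne_zero
  have hmeas : Measurable (gaussianPDF 0 1) := measurable_gaussianPDF 0 1
  have e := (MeasurableEquiv.toLp 2 (Fin k → ℝ)).symm
  rw [_root_.stdGaussian]
  rw [pi_withDensity_aux]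
  have hd : Measurable fun x : EuclideanSpace ℝ (Fin k) => ∏ i, gaussianPDF 0 1 (x i) :=
    Finset.measurable_prod _ fun i _ =>
      hmeas.comp ((measurable_pi_apply i).comp
        ((MeasurableEquiv.toLp 2 (Fin k → ℝ)).symm).measurable)
  have hcomp : (fun x : Fin k → ℝ => ∏ i, gaussianPDF 0 1 (x i)) =
      (fun x : EuclideanSpace ℝ (Fin k) => ∏ i, gaussianPDF 0 1 (x i)) ∘
        (MeasurableEquiv.toLp 2 (Fin k → ℝ)) := rfl
  rw [hcomp, map_withDensity_equiv_aux (MeasurableEquiv.toLp 2 (Fin k → ℝ)) _ hd]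
  have hmapvol : (Measure.pi fun _ : Fin k => (volume : Measure ℝ)).map
      (MeasurableEquiv.toLp 2 (Fin k → ℝ)) = volume := by
    rw [← MeasureTheory.volume_pi]
    exact (MeasurePreserving.symm ((MeasurableEquiv.toLp 2 (Fin k → ℝ)).symm)
      (EuclideanSpace.volume_preserving_symm_measurableEquiv_toLp (Fin k))).map_eq
  rw [hmapvol]
  congr 1
  funext x
  have hnn : ∀ i : Fin k, 0 ≤ gaussianPDFReal 0 1 (x i) := fun i => gaussianPDFReal_nonneg 0 1 _
  have : ∀ i : Fin k, gaussianPDF 0 1 (x i) =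
      ENNReal.ofReal ((Real.sqrt (2 * Real.pi))⁻¹ * Real.exp (-(x i) ^ 2 / 2)) := by
    intro i
    rw [gaussianPDF]
    congr 1
    rw [gaussianPDFReal]
    norm_num
  rw [Finset.prod_congr rfl fun i _ => this i,
    ← ENNReal.ofReal_prod_of_nonneg (fun i _ => by positivity)]
  congr 1
  rw [Finset.prod_mul_distrib, Finset.prod_const, ← Real.exp_sum]
  congr 2
  · simp [Finset.card_univ]
  · have hx2 : ‖x‖ ^ 2 = ∑ i, (x i) ^ 2 := by
      rw [EuclideanSpace.norm_eq]
      rw [Real.sq_sqrt (Finset.sum_nonneg fun i _ => by positivity)]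
      exact Finset.sum_congr rfl fun i _ => by rw [Real.norm_eq_abs, sq_abs]
    rw [hx2, ← Finset.sum_div, ← Finset.sum_neg_distrib]

open ENNReal in
lemma stdGaussian_apply_eq (k : ℕ) (S : Set (EuclideanSpace ℝ (Fin k)))
    (hS : MeasurableSet S) :
    stdGaussian k S = ENNReal.ofReal ((Real.sqrt (2 * Real.pi))⁻¹ ^ k) *
      ∫⁻ t in Set.Ioi (0 : ℝ),
        volume (S ∩ {x : EuclideanSpace ℝ (Fin k) | t < Real.exp (-‖x‖ ^ 2 / 2)}) := by
  rw [stdGaussian_eq_withDensity, withDensity_apply _ hS]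
  have hg : Measurable fun x : EuclideanSpace ℝ (Fin k) => Real.exp (-‖x‖ ^ 2 / 2) :=
    (Real.continuous_exp.comp (by fun_prop)).measurable
  calc ∫⁻ x in S, ENNReal.ofReal ((Real.sqrt (2 * Real.pi))⁻¹ ^ k * Real.exp (-‖x‖ ^ 2 / 2))
      = ∫⁻ x in S, ENNReal.ofReal ((Real.sqrt (2 * Real.pi))⁻¹ ^ k) *
          ENNReal.ofReal (Real.exp (-‖x‖ ^ 2 / 2)) := by
        refine lintegral_congr fun x => ?_
        rw [ENNReal.ofReal_mul (by positivity)]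
    _ = ENNReal.ofReal ((Real.sqrt (2 * Real.pi))⁻¹ ^ k) *
          ∫⁻ x in S, ENNReal.ofReal (Real.exp (-‖x‖ ^ 2 / 2)) := by
        rw [lintegral_const_mul _ (by fun_prop)]
    _ = _ := by
        congr 1
        rw [lintegral_eq_lintegral_meas_lt _ (ae_of_all _ fun x => (Real.exp_pos _).le)
          hg.aemeasurable.restrict]
        refine lintegral_congr fun t => ?_
        rw [Measure.restrict_apply (measurableSet_lt measurable_const hg)]
        rw [Set.inter_comm]

open ENNReal in
lemma stdGaussian_univ (k : ℕ) : stdGaussian k Set.univ = 1 := by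
  rw [_root_.stdGaussian, Measure.map_apply (MeasurableEquiv.toLp 2 (Fin k → ℝ)).measurable
    MeasurableSet.univ]
  simp

open ENNReal in
/-- Gaussian measure of a circular cone with aperture parameter `s` is at most
`(1/(2s))^k`. -/
lemma stdGaussian_cone_le (k : ℕ) (hk : 0 < k) (b : EuclideanSpace ℝ (Fin k)) (hb : ‖b‖ = 1)
    {s : ℝ} (hs : 0 < s) :
    stdGaussian k {w : EuclideanSpace ℝ (Fin k) | s * ‖w‖ ≤ (inner ℝ b w : ℝ)} ≤
      ENNReal.ofReal ((1 / (2 * s)) ^ k) := by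
  classical
  haveI : Nontrivial (EuclideanSpace ℝ (Fin k)) := by
    refine ⟨EuclideanSpace.single ⟨0, hk⟩ (1 : ℝ), 0, fun hcon => ?_⟩
    have := congrArg (fun z : EuclideanSpace ℝ (Fin k) => z ⟨0, hk⟩) hcon
    simpa using this
  set D : Set (EuclideanSpace ℝ (Fin k)) :=
    {w : EuclideanSpace ℝ (Fin k) | s * ‖w‖ ≤ (inner ℝ b w : ℝ)} with hD
  have hDclosed : IsClosed D := by
    have : D = {w : EuclideanSpace ℝ (Fin k) | s * ‖w‖ - (inner ℝ b w : ℝ) ≤ 0} := by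
      ext w; simp [hD, sub_nonpos]
    rw [this]
    exact isClosed_le ((continuous_const.mul continuous_norm).sub
      (continuous_const.inner continuous_id)) continuous_const
  have hDmeas : MeasurableSet D := hDclosed.measurableSet
  set v : ℝ := 1 / (2 * s) with hv
  have hvpos : 0 < v := by positivity
  have hfinrank : Module.finrank ℝ (EuclideanSpace ℝ (Fin k)) = k := finrank_euclideanSpace_fin
  -- key pointwise bound on the sections
  have hkey : ∀ t : ℝ, t ∈ Set.Ioi (0 : ℝ) →
      volume (D ∩ {x : EuclideanSpace ℝ (Fin k) | t < Real.exp (-‖x‖ ^ 2 / 2)}) ≤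
        ENNReal.ofReal (v ^ k) *
          volume {x : EuclideanSpace ℝ (Fin k) | t < Real.exp (-‖x‖ ^ 2 / 2)} := by
    intro t ht
    have ht0 : 0 < t := ht
    by_cases ht1 : 1 ≤ t
    · have hempty : {x : EuclideanSpace ℝ (Fin k) | t < Real.exp (-‖x‖ ^ 2 / 2)} = ∅ := by
        ext x
        simp only [Set.mem_setOf_eq, Set.mem_empty_iff_false, iff_false, not_lt]
        calc Real.exp (-‖x‖ ^ 2 / 2) ≤ 1 := by
              rw [Real.exp_le_one_iff]
              nlinarith [sq_nonneg ‖x‖]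
          _ ≤ t := ht1
      simp [hempty]
    · push_neg at ht1
      set R : ℝ := Real.sqrt (-2 * Real.log t) with hR
      have hlogneg : Real.log t < 0 := Real.log_neg ht0 ht1
      have hRpos : 0 < R := Real.sqrt_pos.mpr (by linarith)
      have hball : {x : EuclideanSpace ℝ (Fin k) | t < Real.exp (-‖x‖ ^ 2 / 2)} = ball 0 R := by
        ext x
        simp only [Set.mem_setOf_eq, mem_ball, dist_zero_right]
        rw [← Real.log_lt_iff_lt_exp ht0]
        constructor
        · intro hx
          have hx2 : ‖x‖ ^ 2 < -2 * Real.log t := by nlinarith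
          have := Real.lt_sqrt (norm_nonneg x) |>.mpr hx2
          exact this
        · intro hx
          have hx2 : ‖x‖ ^ 2 < -2 * Real.log t := (Real.lt_sqrt (norm_nonneg x)).mp hx
          nlinarith
      rw [hball]
      have hsub : D ∩ ball 0 R ⊆ closedBall ((R * v) • b) (R * v) := by
        intro x hx
        obtain ⟨hxD, hxB⟩ := hx
        rw [mem_ball, dist_zero_right] at hxB
        rw [mem_closedBall, dist_eq_norm]
        have hxD' : s * ‖x‖ ≤ (inner ℝ b x : ℝ) := hxD
        have hsq : ‖x - (R * v) • b‖ ^ 2 ≤ (R * v) ^ 2 := by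
          have hexp : ‖x - (R * v) • b‖ ^ 2 =
              ‖x‖ ^ 2 - 2 * ((R * v) * (inner ℝ b x : ℝ)) + (R * v) ^ 2 := by
            rw [@norm_sub_sq_real, real_inner_smul_right, norm_smul, hb,
              real_inner_comm, Real.norm_eq_abs, mul_one, sq_abs]
          have h2vs : 2 * v * s = 1 := by
            rw [hv]
            field_simp
          nlinarith [mul_le_mul_of_nonneg_left hxD' (by positivity : (0:ℝ) ≤ 2 * (R * v)),
            mul_nonneg (norm_nonneg x) (sub_nonneg.mpr hxB.le)]
        have h1 : (0:ℝ) ≤ ‖x - (R * v) • b‖ := norm_nonneg _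
        have h2 : (0:ℝ) ≤ R * v := by positivity
        nlinarith
      calc volume (D ∩ ball 0 R) ≤ volume (closedBall ((R * v) • b) (R * v)) :=
            measure_mono hsub
        _ = ENNReal.ofReal (v ^ k) * volume (ball (0 : EuclideanSpace ℝ (Fin k)) R) := by
            rw [Measure.addHaar_closedBall _ _ (by positivity : (0:ℝ) ≤ R * v),
              Measure.addHaar_ball _ _ hRpos.le, hfinrank, mul_pow,
              ENNReal.ofReal_mul (by positivity : (0:ℝ) ≤ R ^ k)]
            ring
  -- put everything together
  have hrep := stdGaussian_apply_eq k D hDmeas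
  have hrepU := stdGaussian_apply_eq k Set.univ MeasurableSet.univ
  rw [hrep]
  have hbound : (∫⁻ t in Set.Ioi (0 : ℝ),
      volume (D ∩ {x : EuclideanSpace ℝ (Fin k) | t < Real.exp (-‖x‖ ^ 2 / 2)})) ≤
        ENNReal.ofReal (v ^ k) * ∫⁻ t in Set.Ioi (0 : ℝ),
          volume {x : EuclideanSpace ℝ (Fin k) | t < Real.exp (-‖x‖ ^ 2 / 2)} := by
    rw [← lintegral_const_mul' _ _ ENNReal.ofReal_ne_top]
    have hanti : Antitone (fun t : ℝ =>
        volume {x : EuclideanSpace ℝ (Fin k) | t < Real.exp (-‖x‖ ^ 2 / 2)}) :=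
      fun t1 t2 h12 => measure_mono fun x hx => lt_of_le_of_lt h12 hx
    exact setLIntegral_mono_ae
      (measurable_const.mul hanti.measurable).aemeasurable (ae_of_all _ hkey)
  calc ENNReal.ofReal ((Real.sqrt (2 * Real.pi))⁻¹ ^ k) *
        ∫⁻ t in Set.Ioi (0 : ℝ),
          volume (D ∩ {x : EuclideanSpace ℝ (Fin k) | t < Real.exp (-‖x‖ ^ 2 / 2)})
      ≤ ENNReal.ofReal ((Real.sqrt (2 * Real.pi))⁻¹ ^ k) *
          (ENNReal.ofReal (v ^ k) * ∫⁻ t in Set.Ioi (0 : ℝ),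
            volume {x : EuclideanSpace ℝ (Fin k) | t < Real.exp (-‖x‖ ^ 2 / 2)}) :=
        mul_le_mul_right hbound _
    _ = ENNReal.ofReal (v ^ k) * (ENNReal.ofReal ((Real.sqrt (2 * Real.pi))⁻¹ ^ k) *
          ∫⁻ t in Set.Ioi (0 : ℝ),
            volume {x : EuclideanSpace ℝ (Fin k) | t < Real.exp (-‖x‖ ^ 2 / 2)}) := by
        ring
    _ = ENNReal.ofReal (v ^ k) * stdGaussian k Set.univ := by
        rw [hrepU]
        congr 2
        refine lintegral_congr fun t => ?_
        rw [Set.univ_inter]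
    _ = ENNReal.ofReal (v ^ k) := by rw [stdGaussian_univ, mul_one]

set_option maxHeartbeats 1000000 in
/-- Lemma: an extreme point with a large simplicial constant has a small normal cone. If the
tangent cone at `h` contains the circular cone with axis `a` and half-angle `arctan(r/α)`,
and `r²/(α² + r²) ≥ 1/2`, then `ω(N_P(h)) ≤ (√(α² + r²)/(2r))^k`. -/
theorem solidAngle_le_of_simplicial_constant
    (k n : ℕ) (hk : 2 ≤ k) (x : Fin n → EuclideanSpace ℝ (Fin k))
    (P : Set (EuclideanSpace ℝ (Fin k))) (hP : P = convexHull ℝ (Set.range x))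
    (htwo : ∃ a b : EuclideanSpace ℝ (Fin k),
      a ∈ Set.extremePoints ℝ P ∧ b ∈ Set.extremePoints ℝ P ∧ a ≠ b)
    (h : EuclideanSpace ℝ (Fin k)) (hh : h ∈ Set.extremePoints ℝ P)
    (α : ℝ) (hα : α = simplicialConst P h) (hαpos : 0 < α)
    (r : ℝ) (hrpos : 0 < r) (a : EuclideanSpace ℝ (Fin k)) (ha : ‖a‖ = 1)
    (hhalf : 1 / 2 ≤ r ^ 2 / (α ^ 2 + r ^ 2))
    (hcone : {z : EuclideanSpace ℝ (Fin k) |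
        α / Real.sqrt (α ^ 2 + r ^ 2) * ‖z‖ ≤ (inner ℝ a z : ℝ)} ⊆
      {z | ∃ t : ℝ, 0 ≤ t ∧ ∃ y ∈ P, z = t • (y - h)}) :
    solidAngle (normalCone P h) ≤ (Real.sqrt (α ^ 2 + r ^ 2) / (2 * r)) ^ k := by
  set q : ℝ := Real.sqrt (α ^ 2 + r ^ 2) with hq
  have hq2 : q ^ 2 = α ^ 2 + r ^ 2 := Real.sq_sqrt (by positivity)
  have hqpos : 0 < q := Real.sqrt_pos.mpr (by positivity)
  set s : ℝ := r / q with hs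
  set t₀ : ℝ := α / q with ht₀
  have hspos : 0 < s := by positivity
  have ht₀pos : 0 < t₀ := by positivity
  have hst : t₀ ^ 2 + s ^ 2 = 1 := by
    rw [hs, ht₀, div_pow, div_pow, ← add_div, hq2]
    exact div_self (by positivity)
  have hsle1 : s ≤ 1 := by nlinarith
  have ht₀le1 : t₀ ≤ 1 := by nlinarith
  -- Step 1: normal cone is contained in the polar circular cone
  have hsubset : normalCone P h ⊆
      {w : EuclideanSpace ℝ (Fin k) | s * ‖w‖ ≤ (inner ℝ (-a) w : ℝ)} := by
    intro w hw
    -- key consequence of `hcone`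
    have hK : ∀ z : EuclideanSpace ℝ (Fin k), t₀ * ‖z‖ ≤ (inner ℝ a z : ℝ) →
        (inner ℝ w z : ℝ) ≤ 0 := by
      intro z hz
      obtain ⟨t', ht', y, hy, rfl⟩ := hcone hz
      rw [real_inner_smul_right]
      exact mul_nonpos_of_nonneg_of_nonpos ht' (hw y hy)
    set β : ℝ := (inner ℝ a w : ℝ) with hβdef
    set u : EuclideanSpace ℝ (Fin k) := w - β • a with hu
    have haa : (inner ℝ a a : ℝ) = 1 := by
      rw [real_inner_self_eq_norm_sq, ha]; norm_num
    have hau : (inner ℝ a u : ℝ) = 0 := by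
      rw [hu, inner_sub_right, real_inner_smul_right, haa]
      ring
    set nn : ℝ := ‖u‖ with hnn
    have hnn0 : 0 ≤ nn := norm_nonneg _
    have hwu : (inner ℝ w u : ℝ) = nn ^ 2 := by
      have : w = β • a + u := by rw [hu]; abel
      rw [this, inner_add_left, real_inner_smul_left, hau,
        real_inner_self_eq_norm_sq, hnn]
      ring
    have hw2 : ‖w‖ ^ 2 = β ^ 2 + nn ^ 2 := by
      have hww : w = β • a + u := by rw [hu]; abel
      calc ‖w‖ ^ 2 = ‖β • a + u‖ ^ 2 := by rw [← hww]
        _ = ‖β • a‖ ^ 2 + 2 * (inner ℝ (β • a) u : ℝ) + ‖u‖ ^ 2 := norm_add_sq_real _ _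
        _ = β ^ 2 + nn ^ 2 := by
            rw [real_inner_smul_left, hau, norm_smul, ha]
            simp [sq_abs, hnn]
    -- first application: z = a gives β ≤ 0
    have hβ : β ≤ 0 := by
      have := hK a (by rw [ha, mul_one]; rw [haa]; exact ht₀le1)
      rw [real_inner_comm] at this
      exact this
    -- second application: the boundary direction
    have hmain : t₀ * nn * β + s * nn ^ 2 ≤ 0 := by
      set z : EuclideanSpace ℝ (Fin k) := (t₀ * nn) • a + s • u with hz
      have haz : (inner ℝ a z : ℝ) = t₀ * nn := by
        rw [hz, inner_add_right, real_inner_smul_right, real_inner_smul_right, haa, hau]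
        ring
      have hnz : ‖z‖ = nn := by
        have hz2 : ‖z‖ ^ 2 = nn ^ 2 := by
          calc ‖z‖ ^ 2 = ‖(t₀ * nn) • a‖ ^ 2 + 2 * (inner ℝ ((t₀ * nn) • a) (s • u) : ℝ) +
                ‖s • u‖ ^ 2 := norm_add_sq_real _ _
            _ = (t₀ * nn) ^ 2 + (s * nn) ^ 2 := by
                rw [real_inner_smul_left, real_inner_smul_right, hau, norm_smul, norm_smul, ha]
                simp only [Real.norm_eq_abs, mul_one]
                rw [abs_of_nonneg (by positivity : (0:ℝ) ≤ t₀ * nn), abs_of_nonneg hspos.le]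
                ring
            _ = nn ^ 2 := by nlinarith
        have := congrArg Real.sqrt hz2
        rwa [Real.sqrt_sq (norm_nonneg _), Real.sqrt_sq hnn0] at this
      have hzmem : t₀ * ‖z‖ ≤ (inner ℝ a z : ℝ) := by rw [hnz, haz]
      have hwz := hK z hzmem
      rw [hz, inner_add_right, real_inner_smul_right, real_inner_smul_right,
        real_inner_comm a w, ← hβdef, hwu] at hwz
      linarith
    -- conclude
    show s * ‖w‖ ≤ (inner ℝ (-a) w : ℝ)
    rw [inner_neg_left, ← hβdef]
    rcases eq_or_lt_of_le hnn0 with hn0 | hnpos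
    · -- u = 0 case
      have hwβ : ‖w‖ = -β := by
        have : ‖w‖ ^ 2 = (-β) ^ 2 := by rw [hw2, ← hn0]; ring
        have h1 : 0 ≤ ‖w‖ := norm_nonneg _
        have h2 : 0 ≤ -β := by linarith
        nlinarith
      rw [hwβ]
      nlinarith [norm_nonneg w]
    · have h2 : t₀ * β + s * nn ≤ 0 := by nlinarith
      have h3 : s ^ 2 * nn ^ 2 ≤ t₀ ^ 2 * β ^ 2 := by nlinarith
      have h4 : (s * ‖w‖) ^ 2 ≤ (-β) ^ 2 := by nlinarith
      have h5 : 0 ≤ -β := by linarith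
      nlinarith [mul_nonneg hspos.le (norm_nonneg w)]
  -- Step 2: measure bound
  have hk0 : 0 < k := by omega
  have hna : ‖-a‖ = 1 := by rw [norm_neg, ha]
  have hbound := stdGaussian_cone_le k hk0 (-a) hna hspos
  have hmono : stdGaussian k (normalCone P h) ≤
      stdGaussian k {w : EuclideanSpace ℝ (Fin k) | s * ‖w‖ ≤ (inner ℝ (-a) w : ℝ)} :=
    measure_mono hsubset
  have hfinal : stdGaussian k (normalCone P h) ≤ ENNReal.ofReal ((1 / (2 * s)) ^ k) :=
    le_trans hmono hbound
  have hval : (1 / (2 * s)) ^ k = (q / (2 * r)) ^ k := by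
    congr 1
    rw [hs]
    field_simp
  rw [solidAngle]
  rw [hval] at hfinal
  exact ENNReal.toReal_le_of_le_ofReal (by positivity) hfinal
end

section
/- For every n ≥ 2 and every point x ∈ ℝ^n, the Euclidean projection of x onto the intersection of the second-order cone K_2^n = {x ∈ ℝ^n : ‖(x_1, …, x_{n−1})‖₂ ≤ x_n} and the non-negative orthant ℝ₊^n is obtained by first projecting onto ℝ₊^{n−1} × ℝ and then projecting onto K_2^n: P_{K_2^n ∩ ℝ₊^n}(x) = P_{K_2^n}(P_{ℝ₊^{n−1} × ℝ}(x)). -/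
open Metric Set
open scoped Pointwise

/-- The second-order cone `K₂ⁿ = {x ∈ ℝⁿ : ‖(x₁, …, x_{n−1})‖₂ ≤ x_n}`, with `n = m + 1`. -/
def soc (m : ℕ) : Set (EuclideanSpace ℝ (Fin (m + 1))) :=
  {x | Real.sqrt (∑ i : Fin m, x (Fin.castSucc i) ^ 2) ≤ x (Fin.last m)}

/-- The non-negative orthant `ℝ₊ⁿ`, with `n = m + 1`. -/
def orthant (m : ℕ) : Set (EuclideanSpace ℝ (Fin (m + 1))) :=
  {x | ∀ i, 0 ≤ x i}

/-- The set `Q = ℝ₊^{n−1} × ℝ`, with `n = m + 1`. -/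
def halfOrthant (m : ℕ) : Set (EuclideanSpace ℝ (Fin (m + 1))) :=
  {x | ∀ i : Fin m, 0 ≤ x (Fin.castSucc i)}

/-- `y` is the Euclidean (metric) projection of `x` onto `C`: it is the point of `C`
closest to `x`. -/
def IsProjOn {p : ℕ} (C : Set (EuclideanSpace ℝ (Fin p)))
    (x y : EuclideanSpace ℝ (Fin p)) : Prop :=
  y ∈ C ∧ ∀ z ∈ C, ‖x - y‖ ≤ ‖x - z‖

/-- The polar cone `K° = {y : ⟨x, y⟩ ≤ 0 for all x ∈ K}`. -/
def polarCone {p : ℕ} (K : Set (EuclideanSpace ℝ (Fin p))) :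
    Set (EuclideanSpace ℝ (Fin p)) :=
  {y | ∀ x ∈ K, (inner ℝ x y : ℝ) ≤ 0}

section Aux

open Finset

lemma es_sub_apply {p : ℕ} (a b : EuclideanSpace ℝ (Fin p)) (i : Fin p) :
    (a - b) i = a i - b i := rfl

lemma inner_eq {p : ℕ} (a b : EuclideanSpace ℝ (Fin p)) :
    (inner ℝ a b : ℝ) = ∑ i, a i * b i := by
  simp [PiLp.inner_apply, RCLike.inner_apply, mul_comm]

lemma norm_sq_eq {p : ℕ} (v : EuclideanSpace ℝ (Fin p)) : ‖v‖ ^ 2 = ∑ i, v i ^ 2 := by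
  rw [EuclideanSpace.norm_eq, Real.sq_sqrt (by positivity)]
  simp [Real.norm_eq_abs, sq_abs]

lemma norm_le_iff {p : ℕ} (a b : EuclideanSpace ℝ (Fin p)) :
    ‖a‖ ≤ ‖b‖ ↔ ∑ i, a i ^ 2 ≤ ∑ i, b i ^ 2 := by
  rw [← norm_sq_eq, ← norm_sq_eq]
  exact (pow_le_pow_iff_left₀ (norm_nonneg _) (norm_nonneg _) two_ne_zero).symm

lemma proj_VI {p : ℕ} {C : Set (EuclideanSpace ℝ (Fin p))} (hC : Convex ℝ C)
    {x y : EuclideanSpace ℝ (Fin p)} (h : IsProjOn C x y) :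
    ∀ w ∈ C, (inner ℝ (x - y) (w - y) : ℝ) ≤ 0 := by
  haveI : Nonempty C := ⟨⟨y, h.1⟩⟩
  rw [← norm_eq_iInf_iff_real_inner_le_zero hC h.1]
  refine le_antisymm (le_ciInf fun w => h.2 w w.2) ?_
  exact ciInf_le ⟨0, fun b ⟨w, hw⟩ => hw ▸ norm_nonneg _⟩ (⟨y, h.1⟩ : C)

lemma eq_of_VIs {p : ℕ} {x y₁ y₂ : EuclideanSpace ℝ (Fin p)}
    (h1 : (inner ℝ (x - y₁) (y₂ - y₁) : ℝ) ≤ 0)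
    (h2 : (inner ℝ (x - y₂) (y₁ - y₂) : ℝ) ≤ 0) : y₁ = y₂ := by
  have key : (inner ℝ (y₂ - y₁) (y₂ - y₁) : ℝ) ≤ 0 := by
    have : (inner ℝ (y₂ - y₁) (y₂ - y₁) : ℝ)
        = (inner ℝ (x - y₁) (y₂ - y₁) : ℝ) - (inner ℝ (x - y₂) (y₂ - y₁) : ℝ) := by
      rw [← inner_sub_left]; congr 1; abel
    rw [this]
    have h2' : (0:ℝ) ≤ inner ℝ (x - y₂) (y₂ - y₁) := by
      rw [show y₂ - y₁ = -(y₁ - y₂) by abel, inner_neg_right]; linarith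
    linarith
  have h0 : (inner ℝ (y₂ - y₁) (y₂ - y₁) : ℝ) = 0 :=
    le_antisymm key (real_inner_self_nonneg (x := y₂ - y₁))
  have := inner_self_eq_zero.mp h0
  rw [sub_eq_zero] at this
  exact this.symm

noncomputable def trunc (m : ℕ) (x : EuclideanSpace ℝ (Fin (m + 1))) :
    EuclideanSpace ℝ (Fin m) := WithLp.toLp 2 (fun i => x (Fin.castSucc i))

lemma mem_soc_iff {m : ℕ} (x : EuclideanSpace ℝ (Fin (m + 1))) :
    x ∈ soc m ↔ ‖trunc m x‖ ≤ x (Fin.last m) := by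
  rw [EuclideanSpace.norm_eq]
  simp [soc, trunc, Real.norm_eq_abs, sq_abs]

lemma soc_convex (m : ℕ) : Convex ℝ (soc m) := by
  intro u hu v hv a b ha hb hab
  rw [mem_soc_iff] at hu hv ⊢
  have ht : trunc m (a • u + b • v) = a • trunc m u + b • trunc m v := rfl
  have hl : (a • u + b • v) (Fin.last m) = a * u (Fin.last m) + b * v (Fin.last m) := rfl
  rw [ht, hl]
  calc ‖a • trunc m u + b • trunc m v‖ ≤ ‖a • trunc m u‖ + ‖b • trunc m v‖ := norm_add_le _ _
    _ = a * ‖trunc m u‖ + b * ‖trunc m v‖ := by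
        rw [norm_smul, norm_smul, Real.norm_eq_abs, Real.norm_eq_abs, abs_of_nonneg ha,
          abs_of_nonneg hb]
    _ ≤ a * u (Fin.last m) + b * v (Fin.last m) := by gcongr

lemma orthant_convex (m : ℕ) : Convex ℝ (orthant m) := by
  intro u hu v hv a b ha hb hab i
  have : (a • u + b • v) i = a * u i + b * v i := rfl
  rw [this]
  have := hu i
  have := hv i
  positivity

lemma halfOrthant_convex (m : ℕ) : Convex ℝ (halfOrthant m) := by
  intro u hu v hv a b ha hb hab i
  have : (a • u + b • v) (Fin.castSucc i) = a * u (Fin.castSucc i) + b * v (Fin.castSucc i) := rfl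
  rw [this]
  have := hu i
  have := hv i
  positivity

noncomputable def fflip (m : ℕ) (i₀ : Fin m) (y : EuclideanSpace ℝ (Fin (m + 1))) :
    EuclideanSpace ℝ (Fin (m + 1)) := WithLp.toLp 2 (fun j => if j = Fin.castSucc i₀ then -(y j) else y j)

lemma fflip_mem_soc {m : ℕ} {i₀ : Fin m} {y : EuclideanSpace ℝ (Fin (m+1))} (hy : y ∈ soc m) :
    fflip m i₀ y ∈ soc m := by
  simp only [soc, Set.mem_setOf_eq, fflip, PiLp.toLp_apply] at hy ⊢
  have hlast : Fin.last m ≠ Fin.castSucc i₀ := (Fin.castSucc_lt_last i₀).ne'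
  rw [if_neg hlast]
  have : ∑ i : Fin m, (if Fin.castSucc i = Fin.castSucc i₀ then -(y (Fin.castSucc i))
      else y (Fin.castSucc i)) ^ 2 = ∑ i : Fin m, y (Fin.castSucc i) ^ 2 := by
    refine Finset.sum_congr rfl fun i _ => ?_
    split_ifs <;> ring
  rw [this]; exact hy

lemma fflip_dist {m : ℕ} (i₀ : Fin m) (q y : EuclideanSpace ℝ (Fin (m+1))) :
    ∑ j, (q j - fflip m i₀ y j) ^ 2
      = (∑ j, (q j - y j) ^ 2) + 4 * q (Fin.castSucc i₀) * y (Fin.castSucc i₀) := by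
  set i' := Fin.castSucc i₀ with hi'
  rw [← Finset.sum_erase_add _ _ (Finset.mem_univ i'),
    ← Finset.sum_erase_add _ _ (Finset.mem_univ i')]
  have h1 : ∑ j ∈ Finset.univ.erase i', (q j - fflip m i₀ y j) ^ 2
      = ∑ j ∈ Finset.univ.erase i', (q j - y j) ^ 2 := by
    refine Finset.sum_congr rfl fun j hj => ?_
    rw [show fflip m i₀ y j = y j from if_neg (Finset.ne_of_mem_erase hj)]
  have h2 : (q i' - fflip m i₀ y i') ^ 2 = (q i' - y i') ^ 2 + 4 * q i' * y i' := by
    rw [show fflip m i₀ y i' = -(y i') from if_pos rfl]; ring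
  rw [h1, h2]; ring

end Aux

/-- Projection onto the intersection of the second-order cone and the non-negative orthant:
`P_{K₂ⁿ ∩ ℝ₊ⁿ}(x) = P_{K₂ⁿ}(P_{ℝ₊^{n−1} × ℝ}(x))` (here `n = m + 1 ≥ 2`). -/
theorem proj_soc_inter_orthant
    (m : ℕ) (hm : 1 ≤ m) (x q y z : EuclideanSpace ℝ (Fin (m + 1)))
    (hq : IsProjOn (halfOrthant m) x q)
    (hy : IsProjOn (soc m) q y)
    (hz : IsProjOn (soc m ∩ orthant m) x z) :
    z = y := by
  have hqm : q ∈ halfOrthant m := hq.1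
  have VIq := proj_VI (halfOrthant_convex m) hq
  have hym : y ∈ soc m := hy.1
  have VIy := proj_VI (soc_convex m) hy
  -- inner ℝ products with single-coordinate perturbations of q
  have hsingle : ∀ (j₀ : Fin (m+1)) (c : ℝ),
      (∀ i : Fin m, (0:ℝ) ≤ if Fin.castSucc i = j₀ then q (Fin.castSucc i) + c
        else q (Fin.castSucc i)) →
      (x j₀ - q j₀) * c ≤ 0 := by
    intro j₀ c hwmem
    set w : EuclideanSpace ℝ (Fin (m+1)) := WithLp.toLp 2 (fun j => if j = j₀ then q j + c else q j) with hwdef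
    have hw : w ∈ halfOrthant m := fun i => by
      have := hwmem i
      simpa [hwdef] using this
    have h := VIq w hw
    rw [inner_eq] at h
    have hsum : ∑ j, (x - q) j * (w - q) j = (x j₀ - q j₀) * c := by
      rw [Finset.sum_eq_single j₀]
      · rw [es_sub_apply, es_sub_apply]
        simp [hwdef]
      · intro b _ hb
        rw [es_sub_apply, es_sub_apply]
        simp [hwdef, hb]
      · simp
    rwa [hsum] at h
  -- x and q agree at the last coordinate
  have hq_last : x (Fin.last m) - q (Fin.last m) = 0 := by
    have hne : ∀ i : Fin m, Fin.castSucc i ≠ Fin.last m := fun i => (Fin.castSucc_lt_last i).ne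
    have h1 := hsingle (Fin.last m) 1 (fun i => by
      rw [if_neg (hne i)]; exact hqm i)
    have h2 := hsingle (Fin.last m) (-1) (fun i => by
      rw [if_neg (hne i)]; exact hqm i)
    nlinarith [h1, h2]
  -- x - q is nonpositive on the first m coordinates
  have hq_le : ∀ i : Fin m, x (Fin.castSucc i) - q (Fin.castSucc i) ≤ 0 := by
    intro i
    have h1 := hsingle (Fin.castSucc i) 1 (fun k => by
      by_cases hk : Fin.castSucc k = Fin.castSucc i
      · rw [if_pos hk]
        have := hqm k; linarith
      · rw [if_neg hk]
        exact hqm k)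
    linarith [h1]
  -- complementarity: (x - q) ⟂ q coordinatewise
  have hq_inner : (inner ℝ (x - q) q : ℝ) = 0 := by
    have h1 : (inner ℝ (x - q) ((q + q) - q) : ℝ) ≤ 0 := by
      refine VIq _ fun i => ?_
      have h' : (q + q) (Fin.castSucc i) = q (Fin.castSucc i) + q (Fin.castSucc i) := rfl
      show 0 ≤ (q + q) (Fin.castSucc i)
      rw [h']
      have := hqm i; linarith
    have h2 : (inner ℝ (x - q) ((0 : EuclideanSpace ℝ (Fin (m+1))) - q) : ℝ) ≤ 0 := by
      refine VIq _ fun i => le_refl 0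
    rw [show (q + q) - q = q by abel] at h1
    rw [zero_sub, inner_neg_right] at h2
    linarith
  have hterm_nonpos : ∀ j : Fin (m+1), (x j - q j) * q j ≤ 0 := by
    intro j
    induction j using Fin.lastCases with
    | last => rw [hq_last]; ring_nf; exact le_refl 0
    | cast i => exact mul_nonpos_of_nonpos_of_nonneg (hq_le i) (hqm i)
  have hq_perp : ∀ j : Fin (m+1), (x j - q j) * q j = 0 := by
    have hsum : ∑ j, (x j - q j) * q j = 0 := by
      rw [← hq_inner, inner_eq]
      exact Finset.sum_congr rfl fun j _ => by rw [es_sub_apply]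
    intro j
    exact (Finset.sum_eq_zero_iff_of_nonpos (fun j _ => hterm_nonpos j)).mp hsum j
      (Finset.mem_univ j)
  -- key facts about y via the flip symmetry
  have key1 : ∀ i : Fin m, 0 ≤ q (Fin.castSucc i) * y (Fin.castSucc i) := by
    intro i
    have h := hy.2 _ (fflip_mem_soc (i₀ := i) hym)
    rw [norm_le_iff] at h
    have h' : ∑ j, (q j - y j) ^ 2 ≤ ∑ j, (q j - fflip m i y j) ^ 2 := by
      calc ∑ j, (q j - y j) ^ 2 = ∑ j, ((q - y) j) ^ 2 :=
            Finset.sum_congr rfl fun j _ => by rw [es_sub_apply]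
        _ ≤ ∑ j, ((q - fflip m i y) j) ^ 2 := h
        _ = ∑ j, (q j - fflip m i y j) ^ 2 :=
            Finset.sum_congr rfl fun j _ => by rw [es_sub_apply]
    rw [fflip_dist] at h'
    nlinarith [h']
  have key2 : ∀ i : Fin m, q (Fin.castSucc i) = 0 → y (Fin.castSucc i) = 0 := by
    intro i hqi
    have hflipdist : ‖q - fflip m i y‖ = ‖q - y‖ := by
      have h1 : ∑ j, ((q - fflip m i y) j) ^ 2 = ∑ j, ((q - y) j) ^ 2 := by
        calc ∑ j, ((q - fflip m i y) j) ^ 2 = ∑ j, (q j - fflip m i y j) ^ 2 :=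
              Finset.sum_congr rfl fun j _ => by rw [es_sub_apply]
          _ = ∑ j, (q j - y j) ^ 2 := by rw [fflip_dist, hqi]; ring
          _ = ∑ j, ((q - y) j) ^ 2 :=
              Finset.sum_congr rfl fun j _ => by rw [es_sub_apply]
      have := (norm_le_iff (q - fflip m i y) (q - y)).mpr h1.le
      have := (norm_le_iff (q - y) (q - fflip m i y)).mpr h1.ge
      linarith
    have hproj : IsProjOn (soc m) q (fflip m i y) := by
      refine ⟨fflip_mem_soc hym, fun w hw => ?_⟩
      rw [hflipdist]
      exact hy.2 w hw
    have heq : y = fflip m i y :=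
      eq_of_VIs (VIy _ hproj.1) (proj_VI (soc_convex m) hproj y hym)
    have h' : y (Fin.castSucc i) = fflip m i y (Fin.castSucc i) :=
      congrArg (fun v : EuclideanSpace ℝ (Fin (m+1)) => v (Fin.castSucc i)) heq
    have h'' : y (Fin.castSucc i) = -(y (Fin.castSucc i)) := by
      rw [show fflip m i y (Fin.castSucc i) = -(y (Fin.castSucc i)) from if_pos rfl] at h'
      exact h'
    linarith
  -- y is in the orthant
  have y_orth : y ∈ orthant m := by
    intro j
    induction j using Fin.lastCases with
    | last =>
      exact le_trans (Real.sqrt_nonneg _) hym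
    | cast i =>
      rcases eq_or_lt_of_le (hqm i) with h | h
      · rw [key2 i h.symm]
      · nlinarith [key1 i]
  -- variational inequality for y with respect to x on soc ∩ orthant
  have VIy' : ∀ w ∈ soc m ∩ orthant m, (inner ℝ (x - y) (w - y) : ℝ) ≤ 0 := by
    intro w hw
    have hdecomp : x - y = (x - q) + (q - y) := by abel
    rw [hdecomp, inner_add_left]
    have h1 : (inner ℝ (x - q) (w - y) : ℝ) ≤ 0 := by
      rw [inner_eq]
      refine Finset.sum_nonpos fun j _ => ?_
      rw [es_sub_apply, es_sub_apply]
      induction j using Fin.lastCases with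
      | last => rw [hq_last]; ring_nf; exact le_refl 0
      | cast i =>
        by_cases hqi : q (Fin.castSucc i) = 0
        · rw [key2 i hqi, sub_zero]
          exact mul_nonpos_of_nonpos_of_nonneg (hq_le i) (hw.2 (Fin.castSucc i))
        · have : x (Fin.castSucc i) - q (Fin.castSucc i) = 0 := by
            rcases mul_eq_zero.mp (hq_perp (Fin.castSucc i)) with h | h
            · exact h
            · exact absurd h hqi
          rw [this, zero_mul]
    have h2 : (inner ℝ (q - y) (w - y) : ℝ) ≤ 0 := VIy w hw.1
    linarith
  -- conclude by uniqueness
  have VIz := proj_VI ((soc_convex m).inter (orthant_convex m)) hz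
  exact eq_of_VIs (VIz y ⟨hym, y_orth⟩) (VIy' z hz.1)
end

section
/- Let x_1, …, x_n ∈ ℝ^p and suppose conv{x_1, …, x_n} has exactly k extreme points. Let d ≥ k + 1 and let G be a d × p random matrix with i.i.d. standard normal entries. Then, with probability one, for every extreme point h of conv{x_1, …, x_n}, the image Gh is an extreme point of conv{Gx_1, …, Gx_n}; i.e., projecting the point cloud onto a random subspace of dimension at least k + 1 preserves all of the extreme points almost surely. -/
open MeasureTheory ProbabilityTheory Set

noncomputable section AuxRP

lemma auxRP_measurable_eval {ι : Type*} [Fintype ι] (q : MvPolynomial ι ℝ) :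
    Measurable fun y : ι → ℝ => MvPolynomial.eval y q := by
  classical
  simp only [MvPolynomial.eval_eq]
  refine Finset.measurable_sum _ fun c _ => Measurable.mul measurable_const ?_
  exact Finset.measurable_prod _ fun j _ => (measurable_pi_apply j).pow_const _

instance auxRP_noAtoms : NullSingletonClass (gaussianReal 0 1) :=
  ⟨fun a => (gaussianReal_absolutelyContinuous 0 one_ne_zero) (measure_singleton a)⟩

lemma auxRP_mv_null_fin : ∀ (N : ℕ) (q : MvPolynomial (Fin N) ℝ), q ≠ 0 →
    (Measure.pi fun _ : Fin N => gaussianReal 0 1) {y | MvPolynomial.eval y q = 0} = 0 := by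
  intro N
  induction N with
  | zero =>
    intro q hq
    obtain ⟨c, rfl⟩ : ∃ c, q = MvPolynomial.C c :=
      ⟨_, (MvPolynomial.eq_C_of_isEmpty q)⟩
    have hc : c ≠ 0 := fun hc => hq (by rw [hc, map_zero])
    convert measure_empty
    · ext y
      simp [MvPolynomial.eval_C, hc]
    · infer_instance
  | succ N ih =>
    intro q hq
    set μ : Measure ℝ := gaussianReal 0 1 with hμ
    set μN : Measure (Fin N → ℝ) := Measure.pi fun _ : Fin N => μ with hμN
    set q' : Polynomial (MvPolynomial (Fin N) ℝ) := MvPolynomial.finSuccEquiv ℝ N q with hq'def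
    have hq'0 : q' ≠ 0 := by
      intro hzz
      apply hq
      have h2 : (MvPolynomial.finSuccEquiv ℝ N) q = (MvPolynomial.finSuccEquiv ℝ N) 0 := by
        rw [map_zero, ← hq'def, hzz]
      exact (MvPolynomial.finSuccEquiv ℝ N).injective h2
    have hlead : q'.leadingCoeff ≠ 0 := Polynomial.leadingCoeff_ne_zero.mpr hq'0
    have hA : μN {z | MvPolynomial.eval z q'.leadingCoeff = 0} = 0 := ih _ hlead
    set S : Set (Fin (N + 1) → ℝ) := {y | MvPolynomial.eval y q = 0} with hSdef
    have hSm : MeasurableSet S := (auxRP_measurable_eval q) (measurableSet_singleton 0)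
    set e : (Fin (N + 1) → ℝ) ≃ᵐ ℝ × (Fin N → ℝ) :=
      MeasurableEquiv.piFinSuccAbove (fun _ => ℝ) 0 with hedef
    have hmp : MeasurePreserving e.symm (μ.prod μN) (Measure.pi fun _ : Fin (N+1) => μ) :=
      MeasurePreserving.symm e (measurePreserving_piFinSuccAbove (fun _ => μ) 0)
    have h1 : (Measure.pi fun _ : Fin (N+1) => μ) S = (μ.prod μN) (e.symm ⁻¹' S) :=
      (hmp.measure_preimage hSm.nullMeasurableSet).symm
    have hTeq : e.symm ⁻¹' S =
        {tz : ℝ × (Fin N → ℝ) |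
          Polynomial.eval tz.1 (Polynomial.map (MvPolynomial.eval tz.2) q') = 0} := by
      ext ⟨t, z⟩
      have he : e.symm (t, z) = Fin.cons t z := by
        simp [hedef, MeasurableEquiv.piFinSuccAbove, Fin.insertNthEquiv,
          Fin.insertNth_zero']
      simp only [Set.mem_preimage, he, hSdef, Set.mem_setOf_eq,
        MvPolynomial.eval_eq_eval_mv_eval']
      rfl
    have hUm : MeasurableSet (Prod.swap ⁻¹' (e.symm ⁻¹' S) : Set ((Fin N → ℝ) × ℝ)) :=
      measurable_swap (e.symm.measurable hSm)
    have h2 : (μ.prod μN) (e.symm ⁻¹' S) = (μN.prod μ) (Prod.swap ⁻¹' (e.symm ⁻¹' S)) := by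
      have hmap := Measure.map_apply (μ := μ.prod μN) measurable_swap hUm
      rw [Measure.prod_swap] at hmap
      rw [hmap]
      congr 1
    have hae : ∀ᵐ z ∂μN, MvPolynomial.eval z q'.leadingCoeff ≠ 0 := by
      rw [ae_iff]
      simpa using hA
    have h3 : (μN.prod μ) (Prod.swap ⁻¹' (e.symm ⁻¹' S)) = 0 := by
      rw [Measure.measure_prod_null hUm]
      filter_upwards [hae] with z hz
      have hr : (Polynomial.map (MvPolynomial.eval z) q') ≠ 0 := by
        intro h0
        apply hz
        have h4 := congrArg (fun r => Polynomial.coeff r q'.natDegree) h0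
        simpa [Polynomial.coeff_map, Polynomial.coeff_natDegree] using h4
      have hfin : {t : ℝ | Polynomial.eval t (Polynomial.map (MvPolynomial.eval z) q') = 0}.Finite := by
        simpa [Polynomial.IsRoot] using Polynomial.finite_setOf_isRoot hr
      have hpre : Prod.mk z ⁻¹' (Prod.swap ⁻¹' (e.symm ⁻¹' S)) =
          {t : ℝ | Polynomial.eval t (Polynomial.map (MvPolynomial.eval z) q') = 0} := by
        ext t
        simp only [Set.mem_preimage, Prod.swap_prod_mk, hTeq, Set.mem_setOf_eq]
      simp only [Pi.zero_apply]
      rw [hpre]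
      exact hfin.measure_zero μ
    rw [h1, h2, h3]

lemma auxRP_mv_null {ι : Type} [Fintype ι] (q : MvPolynomial ι ℝ) (hq : q ≠ 0) :
    (Measure.pi fun _ : ι => gaussianReal 0 1) {y | MvPolynomial.eval y q = 0} = 0 := by
  classical
  set N := Fintype.card ι
  set φ : ι ≃ Fin N := Fintype.equivFin ι
  have hmp : MeasurePreserving (MeasurableEquiv.piCongrLeft (fun _ : Fin N => ℝ) φ)
      (Measure.pi fun _ : ι => gaussianReal 0 1)
      (Measure.pi fun _ : Fin N => gaussianReal 0 1) :=
    measurePreserving_piCongrLeft (fun _ : Fin N => gaussianReal 0 1) φ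
  have hren : MvPolynomial.rename φ q ≠ 0 := by
    intro h0
    exact hq (MvPolynomial.rename_injective φ φ.injective (by rw [h0, map_zero]))
  have hS' : MeasurableSet {w : Fin N → ℝ | MvPolynomial.eval w (MvPolynomial.rename φ q) = 0} :=
    (auxRP_measurable_eval _) (measurableSet_singleton 0)
  have hpre : (MeasurableEquiv.piCongrLeft (fun _ : Fin N => ℝ) φ) ⁻¹'
      {w : Fin N → ℝ | MvPolynomial.eval w (MvPolynomial.rename φ q) = 0} =
      {y : ι → ℝ | MvPolynomial.eval y q = 0} := by
    ext y
    simp only [Set.mem_preimage, Set.mem_setOf_eq, MvPolynomial.eval_rename]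
    have : ((MeasurableEquiv.piCongrLeft (fun _ : Fin N => ℝ) φ) y) ∘ φ = y := by
      funext i
      exact MeasurableEquiv.piCongrLeft_apply_apply (β := fun _ : Fin N => ℝ) φ y i
    rw [this]
  rw [← hpre, hmp.measure_preimage hS'.nullMeasurableSet]
  exact auxRP_mv_null_fin N _ hren

lemma auxRP_pi_pi_map (d p : ℕ) :
    (Measure.pi fun _ : Fin d => Measure.pi fun _ : Fin p => gaussianReal 0 1) =
      Measure.map (fun g : Fin d × Fin p → ℝ => fun i j => g (i, j))
        (Measure.pi fun _ : Fin d × Fin p => gaussianReal 0 1) := by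
  classical
  set γ : Measure ℝ := gaussianReal 0 1
  have hf : Measurable (fun g : Fin d × Fin p → ℝ => fun i (j : Fin p) => g (i, j)) := by
    refine measurable_pi_lambda _ fun i => measurable_pi_lambda _ fun j => ?_
    exact measurable_pi_apply _
  refine Measure.pi_eq_generateFrom (C := fun _ : Fin d =>
      Set.pi Set.univ '' Set.pi Set.univ fun _ : Fin p => {s : Set ℝ | MeasurableSet s})
    (fun _ => generateFrom_pi) (fun _ => isPiSystem_pi)
    (fun _ => Measure.FiniteSpanningSetsIn.pi fun _ => γ.toFiniteSpanningSetsIn) ?_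
  intro s hs
  choose t ht hts using hs
  have hts' : ∀ i, s i = Set.pi Set.univ (t i) := fun i => (hts i).symm
  have hpre : (fun g : Fin d × Fin p → ℝ => fun i (j : Fin p) => g (i, j)) ⁻¹'
      (Set.pi Set.univ s) = Set.pi Set.univ fun q : Fin d × Fin p => t q.1 q.2 := by
    ext g
    simp only [Set.mem_preimage, Set.mem_pi, Set.mem_univ, forall_true_left]
    constructor
    · intro hg q
      have := hg q.1
      rw [hts' q.1] at this
      exact this q.2 (Set.mem_univ _)
    · intro hg i
      rw [hts' i]
      intro j _
      exact hg (i, j)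
  rw [Measure.map_apply hf (MeasurableSet.univ_pi fun i => by
      rw [hts' i]; exact MeasurableSet.univ_pi fun j => ht i j (Set.mem_univ j))]
  rw [hpre, Measure.pi_pi]
  rw [Fintype.prod_prod_type]
  congr 1
  funext i
  rw [hts' i, Measure.pi_pi]

lemma auxRP_sum_apply {p : ℕ} {ι : Type*} (s : Finset ι)
    (f : ι → EuclideanSpace ℝ (Fin p)) (j : Fin p) :
    (∑ i ∈ s, f i) j = ∑ i ∈ s, f i j := by
  classical
  induction s using Finset.induction with
  | empty => rfl
  | insert _ _ hne ih =>
    rw [Finset.sum_insert hne, Finset.sum_insert hne, PiLp.add_apply, ih]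

def auxRP_L {d p : ℕ} (G : Fin d → Fin p → ℝ) :
    EuclideanSpace ℝ (Fin p) →ₗ[ℝ] (Fin d → ℝ) where
  toFun y := fun i => ∑ j, G i j * y j
  map_add' a b := by
    funext i
    simp only [PiLp.add_apply, mul_add, Finset.sum_add_distrib, Pi.add_apply]
  map_smul' c a := by
    funext i
    simp only [PiLp.smul_apply, smul_eq_mul, RingHom.id_apply, Pi.smul_apply, Finset.mul_sum]
    exact Finset.sum_congr rfl fun j _ => by ring

lemma auxRP_extreme_image {E F : Type*} [AddCommGroup E] [Module ℝ E]
    [AddCommGroup F] [Module ℝ F] (L : E →ₗ[ℝ] F) (P : Set E) (hconv : Convex ℝ P)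
    (hinj : ∀ a ∈ P, ∀ b ∈ P, L a = L b → a = b) {z : E}
    (hz : z ∈ Set.extremePoints ℝ P) : L z ∈ Set.extremePoints ℝ (L '' P) := by
  rw [mem_extremePoints] at hz ⊢
  obtain ⟨hzP, hzext⟩ := hz
  refine ⟨Set.mem_image_of_mem L hzP, ?_⟩
  rintro y1 ⟨a, ha, rfl⟩ y2 ⟨c, hc, rfl⟩ hseg
  obtain ⟨s, t, hs, ht, hst, heq⟩ := hseg
  have hmem : s • a + t • c ∈ P := hconv ha hc hs.le ht.le hst
  have hLz : L (s • a + t • c) = L z := by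
    rw [map_add, L.map_smul, L.map_smul, heq]
  have hz' : s • a + t • c = z := hinj _ hmem _ hzP hLz
  obtain ⟨h1, h2⟩ := hzext a ha c hc ⟨s, t, hs, ht, hst, hz'⟩
  exact ⟨by rw [h1], by rw [h2]⟩

end AuxRP


/-- Projecting a point cloud in `ℝ^p` with `k` extreme points onto a random subspace of
dimension `d ≥ k + 1`, via a `d × p` matrix `G` of i.i.d. standard normal entries, preserves
all extreme points with probability one: a.s. the image `Gh` of every extreme point `h` of
`conv{x₁, …, xₙ}` is an extreme point of `conv{Gx₁, …, Gxₙ}`. -/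
theorem random_projection_preserves_extreme_points
    (p n k d : ℕ) (x : Fin n → EuclideanSpace ℝ (Fin p))
    (P : Set (EuclideanSpace ℝ (Fin p))) (hP : P = convexHull ℝ (Set.range x))
    (h : Fin k → EuclideanSpace ℝ (Fin p)) (hinj : Function.Injective h)
    (hext : Set.range h = Set.extremePoints ℝ P)
    (hd : k + 1 ≤ d) :
    (Measure.pi fun _ : Fin d => Measure.pi fun _ : Fin p => gaussianReal 0 1)
      {G | ∀ y ∈ Set.extremePoints ℝ P,
        (fun i : Fin d => ∑ j : Fin p, G i j * y j) ∈
          Set.extremePoints ℝ (convexHull ℝ (Set.range fun l : Fin n =>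
            fun i : Fin d => ∑ j : Fin p, G i j * x l j))} = 1 := by

  classical
  subst hP
  -- the span of differences of extreme points
  set V : Submodule ℝ (EuclideanSpace ℝ (Fin p)) := vectorSpan ℝ (Set.range h) with hV
  set m : ℕ := Module.finrank ℝ V with hm
  have hmd : m ≤ d := by
    rcases Nat.eq_zero_or_pos k with hk | hk
    · subst hk
      have hre : Set.range h = ∅ := Set.range_eq_empty h
      have : V = ⊥ := by rw [hV, hre, vectorSpan_empty]
      rw [hm, this]
      simp only [finrank_bot]
      omega
    · obtain ⟨k', rfl⟩ : ∃ k', k = k' + 1 := ⟨k - 1, (Nat.succ_pred_eq_of_pos hk).symm⟩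
      have hcard : Fintype.card (Fin (k' + 1)) = k' + 1 := Fintype.card_fin _
      have hle := finrank_vectorSpan_range_le ℝ h hcard
      rw [← hV] at hle
      omega
  -- a basis of V, seen in the ambient space
  set b : Module.Basis (Fin m) ℝ V := Module.finBasis ℝ V with hb
  set B : Fin m → EuclideanSpace ℝ (Fin p) := fun a => (b a : EuclideanSpace ℝ (Fin p)) with hB
  have hBli : LinearIndependent ℝ B :=
    (b.linearIndependent.map' V.subtype V.ker_subtype)
  -- the determinant polynomial
  set Q : MvPolynomial (Fin d × Fin p) ℝ := Matrix.det (Matrix.of fun a c : Fin m =>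
      ∑ j : Fin p, (MvPolynomial.X (Fin.castLE hmd a, j)) * MvPolynomial.C (B c j)) with hQ
  have heval : ∀ g : Fin d × Fin p → ℝ, MvPolynomial.eval g Q =
      Matrix.det (Matrix.of fun a c : Fin m =>
        ∑ j : Fin p, g (Fin.castLE hmd a, j) * B c j) := by
    intro g
    rw [hQ, RingHom.map_det]
    congr 1
    funext a c
    simp [Matrix.map_apply, Matrix.of_apply, map_sum]
  -- the polynomial is nonzero (Gram matrix argument)
  have hQ0 : Q ≠ 0 := by
    intro h0
    set g₀ : Fin d × Fin p → ℝ :=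
      fun q => if hq : (q.1 : ℕ) < m then B ⟨q.1, hq⟩ q.2 else 0 with hg₀
    have h1 : MvPolynomial.eval g₀ Q = 0 := by rw [h0, map_zero]
    rw [heval g₀] at h1
    have hM : (Matrix.of fun a c : Fin m => ∑ j : Fin p, g₀ (Fin.castLE hmd a, j) * B c j) =
        Matrix.of fun a c : Fin m => ∑ j : Fin p, B a j * B c j := by
      funext a c
      simp only [Matrix.of_apply]
      refine Finset.sum_congr rfl fun j _ => ?_
      have : g₀ (Fin.castLE hmd a, j) = B a j := by
        rw [hg₀]
        simp only [Fin.coe_castLE]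
        rw [dif_pos a.isLt]
      rw [this]
    rw [hM] at h1
    obtain ⟨c, hc0, hMc⟩ := Matrix.exists_mulVec_eq_zero_iff.mpr h1
    set w : Fin p → ℝ := fun j => ∑ a, c a * B a j with hw
    have hrow : ∀ a : Fin m, ∑ j, B a j * w j = 0 := by
      intro a
      have := congrFun hMc a
      simp only [Matrix.mulVec, dotProduct, Matrix.of_apply, Pi.zero_apply] at this
      calc ∑ j, B a j * w j = ∑ j, ∑ a', B a j * (c a' * B a' j) := by
            refine Finset.sum_congr rfl fun j _ => ?_
            rw [hw, Finset.mul_sum]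
        _ = ∑ a', (∑ j, B a j * B a' j) * c a' := by
            rw [Finset.sum_comm]
            refine Finset.sum_congr rfl fun a' _ => ?_
            rw [Finset.sum_mul]
            exact Finset.sum_congr rfl fun j _ => by ring
        _ = 0 := this
    have hww : ∑ j, w j * w j = 0 := by
      calc ∑ j, w j * w j = ∑ j, ∑ a, c a * (B a j * w j) := by
            refine Finset.sum_congr rfl fun j _ => ?_
            rw [hw, Finset.sum_mul]
            exact Finset.sum_congr rfl fun a _ => by ring
        _ = ∑ a, c a * (∑ j, B a j * w j) := by
            rw [Finset.sum_comm]
            exact Finset.sum_congr rfl fun a _ => by rw [Finset.mul_sum]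
        _ = 0 := by simp [hrow]
    have hw0 : ∀ j, w j = 0 := by
      intro j
      have := (Finset.sum_eq_zero_iff_of_nonneg
        (fun j _ => mul_self_nonneg (w j))).mp hww j (Finset.mem_univ j)
      exact mul_self_eq_zero.mp this
    have hlin : ∑ a, c a • B a = 0 := by
      ext j
      rw [auxRP_sum_apply]
      simp only [PiLp.smul_apply, smul_eq_mul, PiLp.zero_apply]
      exact hw0 j
    exact hc0 (funext fun a => Fintype.linearIndependent_iff.mp hBli c hlin a)
  -- Krein-Milman: the polytope is the hull of its extreme points
  have hcomp : IsCompact (convexHull ℝ (Set.range x)) := (Set.finite_range x).isCompact_convexHull (𝕜 := ℝ)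
  have hKM := closure_convexHull_extremePoints hcomp (convex_convexHull ℝ _)
  rw [← hext] at hKM
  have hPh : convexHull ℝ (Set.range x) = convexHull ℝ (Set.range h) := by
    rw [← hKM]
    exact ((Set.finite_range h).isClosed_convexHull (𝕜 := ℝ)).closure_eq
  -- deterministic statement for good G
  have hgood : ∀ G : Fin d → Fin p → ℝ,
      MvPolynomial.eval (fun q : Fin d × Fin p => G q.1 q.2) Q ≠ 0 →
      ∀ y ∈ Set.extremePoints ℝ (convexHull ℝ (Set.range x)),
        (fun i : Fin d => ∑ j : Fin p, G i j * y j) ∈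
          Set.extremePoints ℝ (convexHull ℝ (Set.range fun l : Fin n =>
            fun i : Fin d => ∑ j : Fin p, G i j * x l j)) := by
    intro G hG y hy
    set L := auxRP_L G with hLdef
    have hker : ∀ v ∈ V, L v = 0 → v = 0 := by
      intro v hv hLv
      set r : Fin m → ℝ := fun a => b.repr ⟨v, hv⟩ a with hr
      have hvsum : v = ∑ a, r a • B a := by
        have h2 := congrArg V.subtype (b.sum_repr ⟨v, hv⟩)
        rw [map_sum] at h2
        simp only [_root_.map_smul, Submodule.coe_subtype] at h2
        exact h2.symm
      have hvj : ∀ j, v j = ∑ c, r c * B c j := by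
        intro j
        rw [hvsum, auxRP_sum_apply]
        exact Finset.sum_congr rfl fun c _ => by
          rw [PiLp.smul_apply, smul_eq_mul]
      have hMc : (Matrix.of fun a c : Fin m =>
          ∑ j : Fin p, G (Fin.castLE hmd a) j * B c j).mulVec r = 0 := by
        funext a
        have hcoord := congrFun hLv (Fin.castLE hmd a)
        simp only [hLdef, auxRP_L, LinearMap.coe_mk, AddHom.coe_mk, Pi.zero_apply] at hcoord
        simp only [Matrix.mulVec, dotProduct, Matrix.of_apply, Pi.zero_apply]
        calc ∑ c, (∑ j, G (Fin.castLE hmd a) j * B c j) * r c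
            = ∑ j, G (Fin.castLE hmd a) j * v j := by
              simp_rw [Finset.sum_mul]
              rw [Finset.sum_comm]
              refine Finset.sum_congr rfl fun j _ => ?_
              rw [hvj j, Finset.mul_sum]
              exact Finset.sum_congr rfl fun c _ => by ring
          _ = 0 := hcoord
      have hr0 : r = 0 := by
        by_contra hrne
        have hdet : (Matrix.of fun a c : Fin m =>
            ∑ j : Fin p, G (Fin.castLE hmd a) j * B c j).det = 0 :=
          Matrix.exists_mulVec_eq_zero_iff.mp ⟨r, hrne, hMc⟩
        apply hG
        rw [heval]
        exact hdet
      rw [hvsum, hr0]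
      simp
    have hinjP : ∀ a ∈ convexHull ℝ (Set.range x), ∀ c ∈ convexHull ℝ (Set.range x),
        L a = L c → a = c := by
      intro a ha c hc hLeq
      have ha' : a ∈ affineSpan ℝ (Set.range h) :=
        convexHull_subset_affineSpan _ (hPh ▸ ha)
      have hc' : c ∈ affineSpan ℝ (Set.range h) :=
        convexHull_subset_affineSpan _ (hPh ▸ hc)
      have hsub : a - c ∈ V := by
        have hvs := AffineSubspace.vsub_mem_direction ha' hc'
        rw [direction_affineSpan] at hvs
        exact hvs
      have hL0 : L (a - c) = 0 := by rw [map_sub, hLeq, sub_self]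
      exact sub_eq_zero.mp (hker _ hsub hL0)
    have himg : convexHull ℝ (Set.range fun l : Fin n =>
        fun i : Fin d => ∑ j : Fin p, G i j * x l j) =
        L '' convexHull ℝ (Set.range x) := by
      rw [L.image_convexHull, ← Set.range_comp]
      rfl
    rw [himg]
    exact auxRP_extreme_image L _ (convex_convexHull ℝ _) hinjP hy
  -- measure conclusion
  set μ2 := Measure.pi fun _ : Fin d => Measure.pi fun _ : Fin p => gaussianReal 0 1 with hμ2
  set Sbad : Set (Fin d → Fin p → ℝ) :=
    {G | MvPolynomial.eval (fun q : Fin d × Fin p => G q.1 q.2) Q = 0} with hSbad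
  have hmeasu : Measurable fun G : Fin d → Fin p → ℝ => (fun q : Fin d × Fin p => G q.1 q.2) :=
    measurable_pi_lambda _ fun q => (measurable_pi_apply q.2).comp (measurable_pi_apply q.1)
  have hSbadm : MeasurableSet Sbad :=
    ((auxRP_measurable_eval Q).comp hmeasu) (measurableSet_singleton 0)
  have hf : Measurable (fun g : Fin d × Fin p → ℝ => fun i (j : Fin p) => g (i, j)) :=
    measurable_pi_lambda _ fun i => measurable_pi_lambda _ fun j => measurable_pi_apply _
  have hbad0 : μ2 Sbad = 0 := by
    rw [hμ2, auxRP_pi_pi_map d p, Measure.map_apply hf hSbadm]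
    have hpre : (fun g : Fin d × Fin p → ℝ => fun i (j : Fin p) => g (i, j)) ⁻¹' Sbad =
        {g : Fin d × Fin p → ℝ | MvPolynomial.eval g Q = 0} := rfl
    rw [hpre]
    exact auxRP_mv_null Q hQ0
  have hsub2 : Sbadᶜ ⊆ {G | ∀ y ∈ Set.extremePoints ℝ (convexHull ℝ (Set.range x)),
        (fun i : Fin d => ∑ j : Fin p, G i j * y j) ∈
          Set.extremePoints ℝ (convexHull ℝ (Set.range fun l : Fin n =>
            fun i : Fin d => ∑ j : Fin p, G i j * x l j))} :=
    fun G hG => hgood G hG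
  refine le_antisymm prob_le_one ?_
  calc (1 : ENNReal) = μ2 Set.univ := measure_univ.symm
    _ ≤ μ2 Sbadᶜ + μ2 Sbad := by
        rw [← Set.compl_union_self Sbad]
        exact measure_union_le _ _
    _ = μ2 Sbadᶜ := by rw [hbad0, add_zero]
    _ ≤ _ := measure_mono hsub2
end
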